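/- Let Σ = uu^⊤ where u ∈ ℝ^p is a unit vector of the form u = (2/√(5L))·1 on the first L coordinates, (1/√(5L))·1 on the next L coordinates, and 0 elsewhere (p ≥ 2L). Let R = Δ(uu^⊤) be uu^⊤ with its diagonal zeroed. Then u is not an eigenvector of R, and consequently the leading eigenvector û of R satisfies ‖sin Θ(û, u)‖ = √(1 − (û^⊤u)²) ≥ c for some constant c > 0 depending only on L. -/

import Mathlib

open Matrix

/-- `offDiag' M` is the matrix `M` with all diagonal entries set to zero. -/
def Matrix.offDiag' {p : ℕ} (M : Matrix (Fin p) (Fin p) ℝ) : Matrix (Fin p) (Fin p) ℝ :=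
  fun i j => if i = j then 0 else M i j

lemma sum_ite_blocks {p L : ℕ} (h : 2 * L ≤ p) (A B : ℝ) :
    ∑ i : Fin p, (if (i:ℕ) < L then A else if (i:ℕ) < 2*L then B else 0)
      = L * A + L * B := by
  rw [Fin.sum_univ_eq_sum_range (fun i => if i < L then A else if i < 2*L then B else 0)]
  rw [← Finset.sum_subset (Finset.range_subset_range.mpr h)
    (by intro i _ hi; simp only [Finset.mem_range] at hi
        rw [if_neg (by omega), if_neg (by omega)])]
  rw [Finset.range_eq_Ico, ← Finset.sum_Ico_consecutive _ (Nat.zero_le L) (by omega : L ≤ 2*L)]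
  have h1 : ∑ i ∈ Finset.Ico 0 L, (if i < L then A else if i < 2*L then B else 0)
      = ∑ _i ∈ Finset.Ico 0 L, A :=
    Finset.sum_congr rfl (fun i hi => if_pos (by simp [Finset.mem_Ico] at hi; omega))
  have h2 : ∑ i ∈ Finset.Ico L (2*L), (if i < L then A else if i < 2*L then B else 0)
      = ∑ _i ∈ Finset.Ico L (2*L), B :=
    Finset.sum_congr rfl (fun i hi => by
      simp [Finset.mem_Ico] at hi
      rw [if_neg (by omega), if_pos (by omega)])
  rw [h1, h2]
  simp [Nat.card_Ico, mul_comm]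
  left; omega

lemma mulVec_offDiag {p : ℕ} (u w : Fin p → ℝ) (i : Fin p) :
    (Matrix.offDiag' (Matrix.vecMulVec u u)).mulVec w i
      = u i * ((∑ j, u j * w j) - u i * w i) := by
  simp only [Matrix.mulVec, dotProduct, Matrix.offDiag', Matrix.vecMulVec, Matrix.of_apply]
  have : ∀ j, (if i = j then 0 else u i * u j) * w j
      = u i * (u j * w j) - (if j = i then u i * (u i * w i) else 0) := by
    intro j
    rcases eq_or_ne i j with rfl | hij
    · simp
    · rw [if_neg hij, if_neg (Ne.symm hij)]; ring
  rw [Finset.sum_congr rfl (fun j _ => this j), Finset.sum_sub_distrib,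
      Finset.sum_ite_eq' Finset.univ i, if_pos (Finset.mem_univ i), ← Finset.mul_sum]
  ring

lemma sum_eq_blocks {p L : ℕ} (h : 2*L ≤ p) (f : Fin p → ℝ) (A B : ℝ)
    (h1 : ∀ i : Fin p, (i:ℕ) < L → f i = A)
    (h2 : ∀ i : Fin p, L ≤ (i:ℕ) → (i:ℕ) < 2*L → f i = B)
    (h3 : ∀ i : Fin p, 2*L ≤ (i:ℕ) → f i = 0) :
    ∑ i, f i = L*A + L*B := by
  rw [← sum_ite_blocks h A B]
  exact Finset.sum_congr rfl (fun i _ => by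
    by_cases hA : (i:ℕ) < L
    · rw [if_pos hA]; exact h1 i hA
    · by_cases hB : (i:ℕ) < 2*L
      · rw [if_neg hA, if_pos hB]; exact h2 i (Nat.not_lt.mp hA) hB
      · rw [if_neg hA, if_neg hB]; exact h3 i (Nat.not_lt.mp hB))

set_option maxHeartbeats 2000000 in
lemma aux_bound (l t x y : ℝ) (hl1 : 1 ≤ l)
    (key1 : 5*(x*y) = 4*y + x) (key2 : t^2*(4*y^2+x^2) = 5*(x^2*y^2))
    (hxy : x - y = 3/(5*l)) (hy0 : y ≠ 0) :
    (1/(10*l))^2 ≤ 1 - t^2 := by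
  have hl0 : (0:ℝ) < l := by linarith
  obtain ⟨e, hedef⟩ : ∃ e : ℝ, e = 3/(5*l) := ⟨_, rfl⟩
  have hxy3 : e*(5*l) = 3 := by rw [hedef]; field_simp
  have he0 : (0:ℝ) < e := by rw [hedef]; positivity
  have he1 : e ≤ 3/5 := by nlinarith [mul_nonneg he0.le (by linarith : (0:ℝ) ≤ l - 1)]
  have hx' : x = y + e := by rw [hedef]; linarith
  have hem : (0:ℝ) ≤ 1 - e := by linarith
  have hyq : 5*y^2 + 5*y*e - 5*y - e = 0 := by
    rw [hx'] at key1; linear_combination key1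
  have hysq : y^2 ≤ 1 := by
    nlinarith [hyq, he0, he1, mul_nonneg hem (sq_nonneg (y-1)),
      mul_nonneg hem (sq_nonneg (y+1))]
  have hxsq : x^2 ≤ 3 := by
    rw [hx']
    nlinarith [hysq, he0.le, he1, mul_nonneg he0.le (sq_nonneg (y-1)),
      mul_nonneg he0.le (sq_nonneg (y+1))]
  have hy2pos : (0:ℝ) < y^2 := by
    rcases hy0.lt_or_gt with h | h <;> nlinarith
  have hD : (0:ℝ) < 4*y^2 + x^2 := by nlinarith [sq_nonneg x]
  have keyid : (1 - t^2)*(4*y^2+x^2) = (4/5)*(x-y)^2 := by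
    linear_combination (-1:ℝ)*key2 - (1/5)*(5*x*y + 4*y + x)*key1
  have hgnn : (0:ℝ) ≤ 1 - t^2 := by nlinarith [keyid, hD, sq_nonneg (x-y)]
  have hDle : 4*y^2 + x^2 ≤ 7 := by nlinarith
  have hxye : x - y = e := by rw [hedef]; exact hxy
  have e2 : (x-y)^2*(25*l^2) = 9 := by
    rw [hxye]; nlinarith [hxy3]
  have step1 : (4/5)*(x-y)^2 ≤ (1-t^2)*7 := by
    nlinarith [keyid, mul_nonneg hgnn (by linarith : (0:ℝ) ≤ 7 - (4*y^2+x^2))]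
  have step2 : (4/5)*((x-y)^2*(25*l^2)) ≤ (1-t^2)*7*(25*l^2) := by
    nlinarith [mul_le_mul_of_nonneg_right step1 (by positivity : (0:ℝ) ≤ 25*l^2)]
  rw [e2] at step2
  rw [div_pow, div_le_iff₀ (by positivity)]
  nlinarith [step2, hgnn, hl0]

set_option maxHeartbeats 1000000 in
theorem diagonal_deletion_inconsistent (L : ℕ) (hL : 1 ≤ L) :
    (∀ (p : ℕ), 2 * L ≤ p → ∀ u : Fin p → ℝ,
      (u = fun (i : Fin p) => if (i : ℕ) < L then 2 / Real.sqrt (5 * L)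
        else if (i : ℕ) < 2 * L then 1 / Real.sqrt (5 * L) else 0) →
      ¬ ∃ μ : ℝ, (Matrix.offDiag' (Matrix.vecMulVec u u)).mulVec u = μ • u) ∧
    ∃ c : ℝ, 0 < c ∧
      ∀ (p : ℕ), 2 * L ≤ p → ∀ u : Fin p → ℝ,
        (u = fun (i : Fin p) => if (i : ℕ) < L then 2 / Real.sqrt (5 * L)
          else if (i : ℕ) < 2 * L then 1 / Real.sqrt (5 * L) else 0) →
        ∀ uhat : Fin p → ℝ, (∑ i, (uhat i) ^ 2 = 1) →
          (∃ μ : ℝ, (Matrix.offDiag' (Matrix.vecMulVec u u)).mulVec uhat = μ • uhat ∧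
            ∀ (ν : ℝ) (x : Fin p → ℝ), x ≠ 0 →
              (Matrix.offDiag' (Matrix.vecMulVec u u)).mulVec x = ν • x → |ν| ≤ |μ|) →
          c ≤ Real.sqrt (1 - (∑ i, uhat i * u i) ^ 2) := by
  constructor
  · intro p hp u hu
    rintro ⟨μ, hμ⟩
    set ℓ : ℝ := (L : ℝ) with hℓdef
    have hℓ1 : (1:ℝ) ≤ ℓ := by rw [hℓdef]; exact_mod_cast hL
    have hℓ0 : (0:ℝ) < ℓ := by linarith
    set s : ℝ := Real.sqrt (5 * (L:ℝ)) with hsdef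
    have hs0 : 0 < s := Real.sqrt_pos.mpr (by positivity)
    have hss : s * s = 5 * ℓ := Real.mul_self_sqrt (by positivity)
    have hu1 : ∀ i : Fin p, (i:ℕ) < L → u i = 2/s := fun i hi => by rw [hu]; simp [hi]
    have hu2 : ∀ i : Fin p, L ≤ (i:ℕ) → (i:ℕ) < 2*L → u i = 1/s := fun i h1 h2 => by
      rw [hu]; simp only; rw [if_neg (by omega), if_pos h2]
    have hu3 : ∀ i : Fin p, 2*L ≤ (i:ℕ) → u i = 0 := fun i h1 => by
      rw [hu]; simp only; rw [if_neg (by omega), if_neg (by omega)]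
    have ha : (2/s)*(2/s) = 4/(5*ℓ) := by
      rw [div_mul_div_comm, hss]; norm_num
    have hb : (1/s)*(1/s) = 1/(5*ℓ) := by
      rw [div_mul_div_comm, hss]; norm_num
    have hsum : ∑ j, u j * u j = 1 := by
      rw [sum_eq_blocks hp _ ((2/s)*(2/s)) ((1/s)*(1/s))
        (fun i hi => by rw [hu1 i hi]) (fun i h1 h2 => by rw [hu2 i h1 h2])
        (fun i h1 => by rw [hu3 i h1]; ring)]
      rw [ha, hb]; field_simp; rw [hℓdef]; ring
    have i0 : Fin p := ⟨0, by omega⟩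
    have e0 := congrFun hμ ⟨0, by omega⟩
    have e1 := congrFun hμ ⟨L, by omega⟩
    rw [mulVec_offDiag, hsum, Pi.smul_apply, smul_eq_mul] at e0 e1
    rw [hu1 ⟨0, by omega⟩ (by show 0 < L; omega)] at e0
    rw [hu2 ⟨L, by omega⟩ (by simp) (by simp; omega)] at e1
    have hs' : s ≠ 0 := ne_of_gt hs0
    have hμ0 : 1 - (2/s)*(2/s) = μ := by
      field_simp at e0 ⊢
      nlinarith [e0, hs0]
    have hμ1 : 1 - (1/s)*(1/s) = μ := by
      field_simp at e1 ⊢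
      nlinarith [e1, hs0]
    rw [ha] at hμ0; rw [hb] at hμ1
    have : (4:ℝ)/(5*ℓ) = 1/(5*ℓ) := by linarith
    rw [div_eq_div_iff (by positivity) (by positivity)] at this
    nlinarith [hℓ0]
  ·
    have hℓ1 : (1:ℝ) ≤ (L:ℝ) := by exact_mod_cast hL
    have hℓ0 : (0:ℝ) < (L:ℝ) := by linarith
    refine ⟨1/(10*(L:ℝ)), by positivity, ?_⟩
    intro p hp u hu uhat hnorm hex
    obtain ⟨μ, hμ, -⟩ := hex
    set ℓ : ℝ := (L : ℝ) with hℓdef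
    set s : ℝ := Real.sqrt (5 * (L:ℝ)) with hsdef
    have hs0 : 0 < s := Real.sqrt_pos.mpr (by positivity)
    have hs' : s ≠ 0 := ne_of_gt hs0
    have hss : s * s = 5 * ℓ := Real.mul_self_sqrt (by positivity)
    have hu1 : ∀ i : Fin p, (i:ℕ) < L → u i = 2/s := fun i hi => by rw [hu]; simp [hi]
    have hu2 : ∀ i : Fin p, L ≤ (i:ℕ) → (i:ℕ) < 2*L → u i = 1/s := fun i h1 h2 => by
      rw [hu]; simp only; rw [if_neg (by omega), if_pos h2]
    have hu3 : ∀ i : Fin p, 2*L ≤ (i:ℕ) → u i = 0 := fun i h1 => by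
      rw [hu]; simp only; rw [if_neg (by omega), if_neg (by omega)]
    have ha : (2/s)*(2/s) = 4/(5*ℓ) := by rw [div_mul_div_comm, hss]; norm_num
    have hb : (1/s)*(1/s) = 1/(5*ℓ) := by rw [div_mul_div_comm, hss]; norm_num
    set t := ∑ i, uhat i * u i with htdef
    have htsum : ∑ j, u j * uhat j = t := Finset.sum_congr rfl (fun j _ => mul_comm _ _)
    have heig : ∀ i, u i * (t - u i * uhat i) = μ * uhat i := fun i => by
      have h := congrFun hμ i
      rw [mulVec_offDiag, htsum, Pi.smul_apply, smul_eq_mul] at h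
      exact h
    by_cases ht : t = 0
    · rw [ht]; norm_num
      have h1 : ℓ⁻¹ ≤ 1 := inv_le_one_of_one_le₀ hℓ1
      nlinarith [inv_nonneg.mpr hℓ0.le]
    · have hμ0 : μ ≠ 0 := by
        intro h0
        have hblocks : ∀ i : Fin p, (i:ℕ) < 2*L → uhat i * u i = t := by
          intro i hi
          have h := heig i; rw [h0, zero_mul] at h
          have hui : u i ≠ 0 := by
            rcases Nat.lt_or_ge (i:ℕ) L with hc | hc
            · rw [hu1 i hc]; positivity
            · rw [hu2 i hc hi]; positivity
          rcases mul_eq_zero.mp h with h' | h'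
          · exact absurd h' hui
          · have : u i * uhat i = t := by linarith
            linarith [mul_comm (u i) (uhat i), this.symm ▸ mul_comm (uhat i) (u i)]
        have hsum2 := sum_eq_blocks hp (fun i => uhat i * u i) t t
          (fun i hi => hblocks i (by omega)) (fun i _ h2 => hblocks i h2)
          (fun i h3 => by show uhat i * u i = 0; rw [hu3 i h3]; ring)
        rw [← htdef] at hsum2
        have hzero : t * (2*ℓ - 1) = 0 := by linear_combination (-1:ℝ)*hsum2
        rcases mul_eq_zero.mp hzero with h | h
        · exact ht h
        · linarith
      obtain ⟨x, hxdef⟩ : ∃ x : ℝ, x = μ + 4/(5*ℓ) := ⟨_, rfl⟩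
      obtain ⟨y, hydef⟩ : ∃ y : ℝ, y = μ + 1/(5*ℓ) := ⟨_, rfl⟩
      have hxeq : ∀ i : Fin p, (i:ℕ) < L → x * uhat i = t * (2/s) := by
        intro i hi
        have h := heig i; rw [hu1 i hi] at h
        rw [hxdef, ← ha]
        linear_combination -h
      have hyeq : ∀ i : Fin p, L ≤ (i:ℕ) → (i:ℕ) < 2*L → y * uhat i = t * (1/s) := by
        intro i h1 h2
        have h := heig i; rw [hu2 i h1 h2] at h
        rw [hydef, ← hb]
        linear_combination -h
      have hx0 : x ≠ 0 := by
        intro h0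
        have h2 := hxeq ⟨0, by omega⟩ (by show 0 < L; omega)
        rw [h0, zero_mul] at h2
        rcases mul_eq_zero.mp h2.symm with h | h
        · exact ht h
        · have : (0:ℝ) < 2/s := by positivity
          linarith
      have hy0 : y ≠ 0 := by
        intro h0
        have h2 := hyeq ⟨L, by omega⟩ (by simp) (by simp; omega)
        rw [h0, zero_mul] at h2
        rcases mul_eq_zero.mp h2.symm with h | h
        · exact ht h
        · have : (0:ℝ) < 1/s := by positivity
          linarith
      have huh1 : ∀ i : Fin p, (i:ℕ) < L → uhat i = t*(2/s)/x := by
        intro i hi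
        rw [eq_div_iff hx0]
        linear_combination hxeq i hi
      have huh2 : ∀ i : Fin p, L ≤ (i:ℕ) → (i:ℕ) < 2*L → uhat i = t*(1/s)/y := by
        intro i h1 h2
        rw [eq_div_iff hy0]
        linear_combination hyeq i h1 h2
      have huh3 : ∀ i : Fin p, 2*L ≤ (i:ℕ) → uhat i = 0 := by
        intro i h3
        have h := heig i; rw [hu3 i h3, zero_mul] at h
        exact ((mul_eq_zero.mp h.symm).resolve_left hμ0)
      have E1 := sum_eq_blocks hp (fun j => uhat j * u j) ((t*(2/s)/x)*(2/s)) ((t*(1/s)/y)*(1/s))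
        (fun i hi => by show uhat i * u i = _; rw [hu1 i hi, huh1 i hi])
        (fun i h1 h2 => by show uhat i * u i = _; rw [hu2 i h1 h2, huh2 i h1 h2])
        (fun i h3 => by show uhat i * u i = 0; rw [hu3 i h3]; ring)
      rw [← htdef] at E1
      have E2 := sum_eq_blocks hp (fun j => uhat j ^ 2) ((t*(2/s)/x)^2) ((t*(1/s)/y)^2)
        (fun i hi => by show uhat i ^ 2 = _; rw [huh1 i hi])
        (fun i h1 h2 => by show uhat i ^ 2 = _; rw [huh2 i h1 h2])
        (fun i h3 => by show uhat i ^ 2 = 0; rw [huh3 i h3]; ring)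
      rw [hnorm] at E2
      have E1' : t = ℓ*(t*(4/(5*ℓ))/x) + ℓ*(t*(1/(5*ℓ))/y) := by
        rw [← ha, ← hb]
        linear_combination E1
      have E2' : (1:ℝ) = ℓ*(t^2*(4/(5*ℓ))/x^2) + ℓ*(t^2*(1/(5*ℓ))/y^2) := by
        rw [← ha, ← hb]
        linear_combination E2
      have hℓ' : ℓ ≠ 0 := ne_of_gt hℓ0
      field_simp at E1' E2'
      have h5ℓ2 : (5:ℝ)*ℓ^2 ≠ 0 := by positivity
      have h5ℓ2t : (5:ℝ)*ℓ^2*t ≠ 0 := by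
        intro h; rcases mul_eq_zero.mp h with h | h
        · exact h5ℓ2 h
        · exact ht h
      have key1 : 5*(x*y) = 4*y + x :=
        mul_left_cancel₀ h5ℓ2t (by linear_combination (5*ℓ^2*t)*E1')
      have key2 : t^2*(4*y^2+x^2) = 5*(x^2*y^2) :=
        mul_left_cancel₀ h5ℓ2 (by linear_combination (-(5*ℓ^2))*E2')
      have hxy : x - y = 3/(5*ℓ) := by rw [hxdef, hydef]; ring
      refine (Real.le_sqrt' (by positivity)).mpr ?_
      exact aux_bound ℓ t x y hℓ1 key1 key2 hxy hy0
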